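/- For every 0 ≤ r ≤ m, the distribution of the stochastic rank statistic satisfies P(R = r) = Σ_{x ∈ T} H(x, m, r) · q(x), where, writing p̃(x) := Σ_{x' ≺ x} p(x'): if p(x) = 0 then H(x,m,r) = C(m,r) p̃(x)^r (1 − p̃(x))^{m−r}; if p(x) = 1 then H(x,m,r) = 1/(m+1); and if 0 < p(x) < 1 then H(x,m,r) = Σ_{e=0}^{m} [ Σ_{j=0}^{e} C(m−e, r−j) ( p̃(x)/(1−p(x)) )^{r−j} ( 1 − p̃(x)/(1−p(x)) )^{(m−e)−(r−j)} · 1/(e+1) ] · C(m,e) p(x)^e (1−p(x))^{m−e}, where C(n,k) denotes the binomial coefficient (taken to be 0 when k < 0 or k > n). -/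

import Mathlib

open MeasureTheory ProbabilityTheory
open scoped ENNReal

noncomputable section

/-- The uniform distribution on the interval `[0,1]`. -/
def unifIcc : Measure ℝ := volume.restrict (Set.Icc 0 1)

/-- The setup of the stochastic rank statistic: on a common probability space `(Ω, μ)`,
`X 0` has distribution `q`, the `X i` for `i ≠ 0` have distribution `p`, the `U i` are
uniform on `[0,1]`, and all of `X 0, …, X m, U 0, …, U m` are mutually independent.
(Mutual independence of the `2(m+1)` variables is recorded by independence of the pairs
`(X i, U i)` together with each pair having the product law.) -/
def IsRankSetup {T : Type} [MeasurableSpace T] {Ω : Type} [MeasurableSpace Ω]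
    (μ : Measure Ω) (p q : Measure T) (m : ℕ)
    (X : Fin (m + 1) → Ω → T) (U : Fin (m + 1) → Ω → ℝ) : Prop :=
  (∀ i, Measurable (X i)) ∧ (∀ i, Measurable (U i)) ∧
  iIndepFun (fun i ω => (X i ω, U i ω)) μ ∧
  μ.map (fun ω => (X 0 ω, U 0 ω)) = q.prod unifIcc ∧
  ∀ i : Fin (m + 1), i ≠ 0 → μ.map (fun ω => (X i ω, U i ω)) = p.prod unifIcc

open scoped Classical in
/-- The stochastic rank statistic
`R = ∑_{j=1}^m (1[X j ≺ X 0] + 1[X j = X 0 ∧ U j < U 0])`. -/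
def rankStat {T : Type} {Ω : Type} (r : T → T → Prop) (m : ℕ)
    (X : Fin (m + 1) → Ω → T) (U : Fin (m + 1) → Ω → ℝ) (ω : Ω) : ℕ :=
  ∑ j : Fin m, ((if r (X j.succ ω) (X 0 ω) then 1 else 0) +
    (if X j.succ ω = X 0 ω ∧ U j.succ ω < U 0 ω then 1 else 0))

/-- The left-open cumulative distribution function `p̃ x = ∑_{y ≺ x} p y`. -/
def cdfBelow {T : Type} (p : PMF T) (r : T → T → Prop) (x : T) : ℝ≥0∞ :=
  ∑' y : {y : T // r y x}, p y

open scoped Classical in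
/-- The function `H(x, m, rk)` appearing in the exact sampling distribution of the
stochastic rank statistic.  Binomial coefficients `C(n, k)` are taken to be `0` when
`k < 0` or `k > n` (the case `k < 0`, i.e. `j > rk`, is handled by an `if`). -/
def Hfun {T : Type} (p : PMF T) (r : T → T → Prop) (m rk : ℕ) (x : T) : ℝ≥0∞ :=
  if p x = 0 then
    (Nat.choose m rk : ℝ≥0∞) * (cdfBelow p r x) ^ rk * (1 - cdfBelow p r x) ^ (m - rk)
  else if p x = 1 then ((m : ℝ≥0∞) + 1)⁻¹
  else
    ∑ e ∈ Finset.range (m + 1),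
      (∑ j ∈ Finset.range (e + 1),
          (if j ≤ rk then
              (Nat.choose (m - e) (rk - j) : ℝ≥0∞)
                * (cdfBelow p r x / (1 - p x)) ^ (rk - j)
                * (1 - cdfBelow p r x / (1 - p x)) ^ ((m - e) - (rk - j))
            else 0) * ((e : ℝ≥0∞) + 1)⁻¹)
        * (Nat.choose m e : ℝ≥0∞) * (p x) ^ e * (1 - p x) ^ (m - e)


open Finset

open MeasureTheory Finset in
instance : IsProbabilityMeasure unifIcc :=
  ⟨by simp [unifIcc, Real.volume_Icc]⟩

lemma unifIcc_Iio {u : ℝ} (h0 : 0 ≤ u) (h1 : u ≤ 1) :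
    unifIcc (Set.Iio u) = ENNReal.ofReal u := by
  rw [unifIcc, Measure.restrict_apply measurableSet_Iio]
  have : Set.Iio u ∩ Set.Icc 0 1 = Set.Ico 0 u := by
    ext v
    simp only [Set.mem_inter_iff, Set.mem_Iio, Set.mem_Icc, Set.mem_Ico]
    constructor
    · rintro ⟨h, h2, h3⟩; exact ⟨h2, h⟩
    · rintro ⟨h2, h⟩; exact ⟨h, h2, le_trans (le_of_lt h) h1⟩
  rw [this, Real.volume_Ico, sub_zero]

open intervalIntegral in
/-- Beta integral for natural exponents. -/
lemma beta_nat (i j : ℕ) :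
    ∫ u in (0:ℝ)..1, u ^ j * (1 - u) ^ i
      = (j.factorial * i.factorial : ℝ) / ((j + i + 1).factorial) := by
  induction i generalizing j with
  | zero =>
    simp only [pow_zero, mul_one, integral_pow, one_pow, Nat.add_zero]
    rw [Nat.factorial_succ]
    push_cast
    rw [eq_div_iff (by positivity)]
    field_simp
    simp
  | succ i ih =>
    have hj1 : ((j:ℝ) + 1) ≠ 0 := by positivity
    have hparts :
        ∫ x in (0:ℝ)..1, (1 - x) ^ (i + 1) * x ^ j
          = (1-(1:ℝ)) ^ (i+1) * ((1:ℝ)^(j+1)/(j+1)) - (1-(0:ℝ))^(i+1) * ((0:ℝ)^(j+1)/(j+1))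
            - ∫ x in (0:ℝ)..1, (((i:ℝ)+1) * (1 - x) ^ i * (-1)) * (x^(j+1)/(j+1)) := by
      apply intervalIntegral.integral_mul_deriv_eq_deriv_mul
        (u := fun x : ℝ => (1 - x)^(i+1)) (v := fun x : ℝ => x^(j+1)/((j:ℝ)+1))
        (u' := fun x : ℝ => ((i:ℝ)+1) * (1 - x)^i * (-1)) (v' := fun x : ℝ => x^j)
      · intro x _
        have h1 : HasDerivAt (fun x : ℝ => 1 - x) (-1) x := by
          simpa using (hasDerivAt_id x).const_sub 1
        have := h1.fun_pow (i+1)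
        simpa using this
      · intro x _
        have := (hasDerivAt_pow (j+1) x).div_const ((j:ℝ)+1)
        simpa [mul_div_assoc, mul_div_cancel_left₀ _ hj1] using this
      · apply Continuous.intervalIntegrable; continuity
      · apply Continuous.intervalIntegrable; continuity
    have hcomm : ∫ u in (0:ℝ)..1, u ^ j * (1 - u) ^ (i+1)
        = ∫ x in (0:ℝ)..1, (1 - x) ^ (i + 1) * x ^ j := by
      congr 1; ext x; ring
    have hre : ∫ x in (0:ℝ)..1, (((i:ℝ)+1) * (1 - x) ^ i * (-1)) * (x^(j+1)/(j+1))
        = (-((i:ℝ)+1)/((j:ℝ)+1)) * ∫ x in (0:ℝ)..1, x ^ (j+1) * (1 - x) ^ i := by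
      rw [← intervalIntegral.integral_const_mul]
      congr 1; ext x; field_simp
    rw [hcomm, hparts, hre, ih (j+1)]
    have h2 : ((j + 1 + i + 1).factorial : ℝ) ≠ 0 := by positivity
    simp only [zero_pow (Nat.succ_ne_zero j), zero_div, mul_zero, sub_self, zero_pow, ne_eq]
    have : (j + (i + 1) + 1) = (j + 1 + i + 1) := by omega
    rw [this]
    rw [Nat.factorial_succ (j), Nat.factorial_succ (i)]
    push_cast
    field_simp
    ring

lemma coeff_nat_eq {m rk e j : ℕ} (hrk : rk ≤ m) (hj : j ≤ rk) (hje : j ≤ e)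
    (hei : e - j ≤ m - rk) :
    m.choose rk * rk.choose j * (m - rk).choose (e - j) * j.factorial * (e - j).factorial
      = m.choose e * (m - e).choose (rk - j) * e.factorial := by
  have hem : e ≤ m := by omega
  have hrkj : rk - j ≤ m - e := by omega
  have h1 := Nat.choose_mul_factorial_mul_factorial hrk
  have h2 := Nat.choose_mul_factorial_mul_factorial hj
  have h3 := Nat.choose_mul_factorial_mul_factorial hei
  have h4 := Nat.choose_mul_factorial_mul_factorial hem
  have h5 := Nat.choose_mul_factorial_mul_factorial hrkj
  have hkey : m - rk - (e - j) = m - e - (rk - j) := by omega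
  have hL : (m.choose rk * rk.choose j * (m - rk).choose (e - j) * j.factorial
      * (e - j).factorial) * ((rk - j).factorial * (m - rk - (e - j)).factorial)
      = m.factorial := by
    rw [← h1, ← h2, ← h3]; ring
  have hR : (m.choose e * (m - e).choose (rk - j) * e.factorial)
      * ((rk - j).factorial * (m - rk - (e - j)).factorial) = m.factorial := by
    rw [hkey, ← h4, ← h5]; ring
  have hD : 0 < (rk - j).factorial * (m - rk - (e - j)).factorial :=
    Nat.mul_pos (Nat.factorial_pos _) (Nat.factorial_pos _)
  exact Nat.eq_of_mul_eq_mul_right hD (hL.trans hR.symm)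

open Finset in
lemma real_identity (m rk : ℕ) (hrk : rk ≤ m) (a b : ℝ) (ha : 0 ≤ a) (hb : 0 ≤ b)
    (hab : a + b ≤ 1) (hb1 : b < 1) :
    ∫ u in (0:ℝ)..1, (m.choose rk : ℝ) * (a + b*u)^rk * (1 - (a + b*u))^(m-rk)
      = ∑ e ∈ range (m+1),
          (∑ j ∈ range (e+1),
            (if j ≤ rk then ((m-e).choose (rk-j) : ℝ) * (a/(1-b))^(rk-j)
                * (1 - a/(1-b))^((m-e)-(rk-j)) else 0) * ((e:ℝ)+1)⁻¹)
          * ((m.choose e : ℝ)) * b^e * (1-b)^(m-e) := by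
  have hd : (1:ℝ) - b ≠ 0 := by linarith
  set c : ℕ → ℕ → ℝ := fun j i =>
    (m.choose rk : ℝ) * (rk.choose j) * ((m-rk).choose i) * a^(rk-j) * b^(j+i)
      * (1-a-b)^(m-rk-i) with hc
  -- pointwise expansion of the integrand
  have hpt : ∀ u : ℝ, (m.choose rk : ℝ) * (a + b*u)^rk * (1 - (a + b*u))^(m-rk)
      = ∑ p ∈ range (rk+1) ×ˢ range (m-rk+1), c p.1 p.2 * (u^p.1 * (1-u)^p.2) := by
    intro u
    have h1 : a + b*u = b*u + a := by ring
    have h2 : 1 - (a + b*u) = b*(1-u) + (1-a-b) := by ring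
    rw [h2, h1, add_pow, add_pow, sum_product]
    rw [Finset.mul_sum]
    conv_rhs => rw [Finset.sum_comm]
    refine Finset.sum_congr rfl fun i hi => ?_
    rw [Finset.mul_sum, Finset.sum_mul]
    refine Finset.sum_congr rfl fun j hj => ?_
    simp only [hc, mul_pow]
    ring
  -- compute the integral
  have hint : ∫ u in (0:ℝ)..1, (m.choose rk : ℝ) * (a + b*u)^rk * (1 - (a + b*u))^(m-rk)
      = ∑ p ∈ range (rk+1) ×ˢ range (m-rk+1),
          c p.1 p.2 * ((p.1.factorial * p.2.factorial : ℝ) / ((p.1 + p.2 + 1).factorial)) := by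
    simp_rw [hpt]
    rw [intervalIntegral.integral_finset_sum]
    · exact Finset.sum_congr rfl fun p _ => by
        rw [intervalIntegral.integral_const_mul, beta_nat]
    · intro p _
      apply Continuous.intervalIntegrable
      continuity
  rw [hint]
  have hmono : ∀ e j : ℕ, j ≤ rk → j ≤ e → e ≤ m → e - j ≤ m - rk →
      (a/(1-b))^(rk-j) * (1 - a/(1-b))^((m-e)-(rk-j)) * (1-b)^(m-e)
        = a^(rk-j) * (1-a-b)^(m-rk-(e-j)) := by
    intro e j h1 h2 h3 h4
    have hsub : 1 - a/(1-b) = (1-a-b)/(1-b) := by field_simp; ring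
    have hrkj : rk - j ≤ m - e := by omega
    have hexp : (m-e)-(rk-j) = m-rk-(e-j) := by omega
    have hsplit : (1-b)^(m-e) = (1-b)^(rk-j) * (1-b)^((m-e)-(rk-j)) := by
      rw [← pow_add]; congr 1; omega
    rw [hsub, div_pow, div_pow, hsplit, ← hexp]
    field_simp
  have hcoef : ∀ e j : ℕ, j ≤ rk → j ≤ e → e ≤ m → e - j ≤ m - rk →
      (m.choose rk : ℝ) * (rk.choose j) * ((m-rk).choose (e-j))
        * ((j.factorial * (e-j).factorial : ℝ) / ((j + (e-j) + 1).factorial))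
      = (m.choose e : ℝ) * ((m-e).choose (rk-j)) * ((e:ℝ)+1)⁻¹ := by
    intro e j h1 h2 h3 h4
    have hn := coeff_nat_eq (m := m) (rk := rk) (e := e) (j := j) (by omega) h1 h2 h4
    have he1 : j + (e-j) + 1 = e + 1 := by omega
    rw [he1, Nat.factorial_succ]
    have hfac : ((e.factorial : ℝ)) ≠ 0 := Nat.cast_ne_zero.2 (Nat.factorial_ne_zero _)
    have he0 : ((e:ℝ)+1) ≠ 0 := by positivity
    have hcast : ((m.choose rk : ℝ) * (rk.choose j) * ((m-rk).choose (e-j))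
        * (j.factorial) * ((e-j).factorial))
        = (m.choose e : ℝ) * ((m-e).choose (rk-j)) * (e.factorial) := by
      exact_mod_cast congrArg (fun n : ℕ => (n : ℝ)) hn
    push_cast
    field_simp
    linear_combination hcast
  -- rewrite the RHS as a sum over the full grid
  set R : ℕ × ℕ → ℝ := fun q =>
    if q.2 ≤ q.1 then
      (if q.2 ≤ rk then ((m-q.1).choose (rk-q.2) : ℝ) * (a/(1-b))^(rk-q.2)
          * (1 - a/(1-b))^((m-q.1)-(rk-q.2)) else 0) * ((q.1:ℝ)+1)⁻¹
        * (m.choose q.1 : ℝ) * b^q.1 * (1-b)^(m-q.1)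
    else 0 with hR
  have hRHS : (∑ e ∈ range (m+1),
          (∑ j ∈ range (e+1),
            (if j ≤ rk then ((m-e).choose (rk-j) : ℝ) * (a/(1-b))^(rk-j)
                * (1 - a/(1-b))^((m-e)-(rk-j)) else 0) * ((e:ℝ)+1)⁻¹)
          * ((m.choose e : ℝ)) * b^e * (1-b)^(m-e))
      = ∑ q ∈ range (m+1) ×ˢ range (m+1), R q := by
    rw [sum_product]
    refine Finset.sum_congr rfl fun e he => ?_
    have hem : e ≤ m := by simpa using Nat.lt_succ_iff.mp (mem_range.mp he)
    have hfil : range (e+1) = (range (m+1)).filter (fun j => j ≤ e) := by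
      ext j; simp [Nat.lt_succ_iff]; omega
    rw [sum_mul, sum_mul, sum_mul, hfil, sum_filter]
  rw [hRHS]
  -- drop the vanishing terms
  have hvan : ∑ q ∈ range (m+1) ×ˢ range (m+1), R q
      = ∑ q ∈ (range (m+1) ×ˢ range (m+1)).filter
          (fun q => q.2 ≤ rk ∧ q.2 ≤ q.1 ∧ q.1 - q.2 ≤ m - rk), R q := by
    refine (Finset.sum_filter_of_ne ?_).symm
    intro q hq hne
    by_contra hc2
    push_neg at hc2
    apply hne
    simp only [hR]
    rcases Nat.lt_or_ge q.1 q.2 with h | h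
    · rw [if_neg (by omega)]
    rw [if_pos h]
    rcases Nat.lt_or_ge rk q.2 with h2 | h2
    · rw [if_neg (by omega)]; ring
    have h3 : m - rk < q.1 - q.2 := by
      have := hc2 h2 h
      omega
    have hq1 : q.1 ≤ m := by
      simp only [mem_product, mem_range, Nat.lt_succ_iff] at hq
      exact hq.1
    have : m - q.1 < rk - q.2 := by omega
    rw [if_pos h2, Nat.choose_eq_zero_of_lt this]
    ring
  rw [hvan]
  -- reindex
  refine Finset.sum_nbij' (i := fun p => (p.1 + p.2, p.1)) (j := fun q => (q.2, q.1 - q.2))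
    ?_ ?_ ?_ ?_ ?_
  · intro p hp
    simp only [mem_product, mem_range, Nat.lt_succ_iff, mem_filter] at hp ⊢
    omega
  · intro q hq
    simp only [mem_product, mem_range, Nat.lt_succ_iff, mem_filter] at hq ⊢
    omega
  · intro p hp; simp
  · intro q hq
    simp only [mem_product, mem_range, Nat.lt_succ_iff, mem_filter] at hq
    have : q.2 + (q.1 - q.2) = q.1 := by omega
    simp [this]
  · intro p hp
    simp only [mem_product, mem_range, Nat.lt_succ_iff] at hp
    obtain ⟨hp1, hp2⟩ := hp
    simp only [hR, hc]
    rw [if_pos (by omega : p.1 ≤ p.1 + p.2), if_pos hp1]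
    have hsl : p.1 + p.2 - p.1 = p.2 := by omega
    have hm := hmono (p.1 + p.2) p.1 hp1 (by omega) (by omega) (by omega)
    have hcf := hcoef (p.1 + p.2) p.1 hp1 (by omega) (by omega) (by omega)
    rw [hsl] at hm hcf
    calc (m.choose rk : ℝ) * (rk.choose p.1) * ((m-rk).choose p.2) * a^(rk-p.1)
          * b^(p.1+p.2) * (1-a-b)^(m-rk-p.2)
          * ((p.1.factorial * p.2.factorial : ℝ) / ((p.1 + p.2 + 1).factorial))
        = ((m.choose rk : ℝ) * (rk.choose p.1) * ((m-rk).choose p.2)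
            * ((p.1.factorial * p.2.factorial : ℝ) / ((p.1 + p.2 + 1).factorial)))
          * (a^(rk-p.1) * (1-a-b)^(m-rk-p.2)) * b^(p.1+p.2) := by ring
      _ = ((m.choose (p.1+p.2) : ℝ) * ((m-(p.1+p.2)).choose (rk-p.1)) * (((p.1+p.2:ℕ):ℝ)+1)⁻¹)
          * (a^(rk-p.1) * (1-a-b)^(m-rk-p.2)) * b^(p.1+p.2) := by rw [← hcf]
      _ = ((m.choose (p.1+p.2) : ℝ) * ((m-(p.1+p.2)).choose (rk-p.1)) * (((p.1+p.2:ℕ):ℝ)+1)⁻¹)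
          * ((a/(1-b))^(rk-p.1) * (1 - a/(1-b))^((m-(p.1+p.2))-(rk-p.1)) * (1-b)^(m-(p.1+p.2)))
          * b^(p.1+p.2) := by rw [hm]
      _ = ((m-(p.1+p.2)).choose (rk-p.1) : ℝ) * (a/(1-b))^(rk-p.1)
            * (1 - a/(1-b))^((m-(p.1+p.2))-(rk-p.1)) * (((p.1+p.2:ℕ):ℝ)+1)⁻¹
            * (m.choose (p.1+p.2) : ℝ) * b^(p.1+p.2) * (1-b)^(m-(p.1+p.2)) := by
          push_cast; ring

open Finset in
open scoped Classical in
lemma binom_count {α : Type*} [MeasurableSpace α] (κ : Measure α) [IsProbabilityMeasure κ]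
    {A : Set α} (hA : MeasurableSet A) (n k : ℕ) :
    (Measure.pi fun _ : Fin n => κ) {w | (∑ j : Fin n, if w j ∈ A then 1 else 0) = k}
      = (n.choose k : ℝ≥0∞) * κ A ^ k * (1 - κ A) ^ (n - k) := by
  classical
  set box : Finset (Fin n) → Set (Fin n → α) :=
    fun s => Set.univ.pi fun i => if i ∈ s then A else Aᶜ with hboxdef
  have hboxmem : ∀ s w, w ∈ box s ↔ ∀ i, (w i ∈ A ↔ i ∈ s) := by
    intro s w
    simp only [hboxdef, Set.mem_pi, Set.mem_univ, forall_true_left]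
    constructor
    · intro h i
      by_cases hi : i ∈ s
      · have := h i; rw [if_pos hi] at this; simp [hi, this]
      · have := h i; rw [if_neg hi] at this; simp only [hi, iff_false]; exact this
    · intro h i
      by_cases hi : i ∈ s
      · rw [if_pos hi]; exact (h i).2 hi
      · rw [if_neg hi]; intro hc; exact hi ((h i).1 hc)
  have hbox : ∀ s : Finset (Fin n),
      (Measure.pi fun _ : Fin n => κ) (box s) = κ A ^ s.card * (1 - κ A) ^ (n - s.card) := by
    intro s
    rw [hboxdef, Measure.pi_pi, ← Finset.prod_sdiff (Finset.subset_univ s)]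
    have h1 : ∀ i ∈ s, κ (if i ∈ s then A else Aᶜ) = κ A := by intro i hi; rw [if_pos hi]
    have h2 : ∀ i ∈ (univ \ s), κ (if i ∈ s then A else Aᶜ) = 1 - κ A := by
      intro i hi
      rw [Finset.mem_sdiff] at hi
      rw [if_neg hi.2, prob_compl_eq_one_sub hA]
    rw [Finset.prod_congr rfl h1, Finset.prod_congr rfl h2, Finset.prod_const,
      Finset.prod_const, Finset.card_sdiff_of_subset (Finset.subset_univ s), Finset.card_univ,
      Fintype.card_fin]
    ring
  have hevent : {w : Fin n → α | (∑ j : Fin n, if w j ∈ A then 1 else 0) = k}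
      = ⋃ s ∈ Finset.powersetCard k (univ : Finset (Fin n)), box s := by
    ext w
    simp only [Set.mem_setOf_eq, Set.mem_iUnion, Finset.mem_powersetCard, exists_prop]
    constructor
    · intro hw
      refine ⟨univ.filter (fun j => w j ∈ A), ⟨Finset.subset_univ _, ?_⟩, ?_⟩
      · rw [← hw, Finset.card_filter]
      · rw [hboxmem]; intro i; simp
    · rintro ⟨s, ⟨-, hcard⟩, hmem⟩
      rw [hboxmem] at hmem
      calc (∑ j : Fin n, if w j ∈ A then 1 else 0)
          = ∑ j : Fin n, if j ∈ s then 1 else 0 :=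
            Finset.sum_congr rfl (fun j _ => by simp only [hmem j])
        _ = s.card := by rw [Finset.sum_ite_mem, Finset.univ_inter, Finset.sum_const, smul_eq_mul,
            mul_one]
        _ = k := hcard
  have hboxmeas : ∀ s, MeasurableSet (box s) := by
    intro s
    apply MeasurableSet.univ_pi
    intro i
    by_cases hi : i ∈ s
    · rw [if_pos hi]; exact hA
    · rw [if_neg hi]; exact hA.compl
  have hdisj : Set.Pairwise ↑(Finset.powersetCard k (univ : Finset (Fin n)))
      (Function.onFun Disjoint box) := by
    intro s _ t _ hst
    rw [Function.onFun, Set.disjoint_left]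
    intro w hws hwt
    apply hst
    ext i
    rw [← (hboxmem s w).1 hws i, (hboxmem t w).1 hwt i]
  rw [hevent, measure_biUnion_finset hdisj (fun s _ => hboxmeas s)]
  have : ∀ s ∈ Finset.powersetCard k (univ : Finset (Fin n)),
      (Measure.pi fun _ : Fin n => κ) (box s) = κ A ^ k * (1 - κ A) ^ (n - k) := by
    intro s hs
    rw [hbox s, (Finset.mem_powersetCard.1 hs).2]
  rw [Finset.sum_congr rfl this, Finset.sum_const, Finset.card_powersetCard, Finset.card_univ,
    Fintype.card_fin, nsmul_eq_mul, mul_assoc]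

section PerX
variable {T : Type} [Countable T] [MeasurableSpace T] [MeasurableSingletonClass T]

/-- The "success" set for reference value `x` and threshold `u`. -/
def succSet (r : T → T → Prop) (x : T) (u : ℝ) : Set (T × ℝ) :=
  ({y | r y x} ×ˢ Set.univ) ∪ ({x} ×ˢ Set.Iio u)

lemma succSet_measurable (r : T → T → Prop) (x : T) (u : ℝ) :
    MeasurableSet (succSet r x u) :=
  (((Set.to_countable _).measurableSet.prod MeasurableSet.univ).union
    ((measurableSet_singleton x).prod measurableSet_Iio))

lemma mem_succSet_iff {r : T → T → Prop} {x : T} {u : ℝ} {yv : T × ℝ} :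
    yv ∈ succSet r x u ↔ (r yv.1 x ∨ (yv.1 = x ∧ yv.2 < u)) := by
  cases yv with
  | mk y v =>
    simp only [succSet, Set.mem_union, Set.mem_prod, Set.mem_setOf_eq, Set.mem_univ,
      Set.mem_singleton_iff, Set.mem_Iio, and_true]

lemma succSet_measure (p : PMF T) (r : T → T → Prop) (hirr : ∀ y, ¬ r y y)
    (x : T) (u : ℝ) :
    (p.toMeasure.prod unifIcc) (succSet r x u)
      = cdfBelow p r x + p x * unifIcc (Set.Iio u) := by
  have hdisj : Disjoint ({y : T | r y x} ×ˢ (Set.univ : Set ℝ)) ({x} ×ˢ Set.Iio u) := by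
    rw [Set.disjoint_left]
    rintro ⟨y, v⟩ hy hx
    simp only [Set.mem_prod, Set.mem_setOf_eq, Set.mem_singleton_iff] at hy hx
    exact hirr x (hx.1 ▸ hy.1)
  rw [succSet, measure_union hdisj ((measurableSet_singleton x).prod measurableSet_Iio),
    Measure.prod_prod, Measure.prod_prod, measure_univ, mul_one,
    PMF.toMeasure_apply_singleton _ _ (measurableSet_singleton x)]
  congr 1
  rw [PMF.toMeasure_apply p (Set.to_countable {y : T | r y x}).measurableSet, cdfBelow,
    ← tsum_subtype {y : T | r y x} (fun y => p y)]
  rfl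

lemma succSet_prob_le (p : PMF T) (r : T → T → Prop) (hirr : ∀ y, ¬ r y y) (x : T) :
    cdfBelow p r x + p x ≤ 1 := by
  have h := succSet_measure p r hirr x 1
  have hle : (p.toMeasure.prod unifIcc) (succSet r x 1) ≤ 1 := prob_le_one
  rw [h, unifIcc_Iio zero_le_one le_rfl, ENNReal.ofReal_one, mul_one] at hle
  exact hle

/-- The inner integral computation, per `x`. -/
lemma per_x_integral (p : PMF T) (r : T → T → Prop) (hirr : ∀ y, ¬ r y y)
    (m rk : ℕ) (hrk : rk ≤ m) (x : T) :
    ∫⁻ u, (m.choose rk : ℝ≥0∞) * (cdfBelow p r x + p x * unifIcc (Set.Iio u)) ^ rk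
        * (1 - (cdfBelow p r x + p x * unifIcc (Set.Iio u))) ^ (m - rk) ∂unifIcc
      = Hfun p r m rk x := by
  classical
  have hab := succSet_prob_le p r hirr x
  have haE_top : cdfBelow p r x ≠ ∞ :=
    ne_top_of_le_ne_top ENNReal.one_ne_top (le_trans le_self_add hab)
  have hbE_top : p x ≠ ∞ := ne_top_of_le_ne_top ENNReal.one_ne_top (p.coe_le_one x)
  set a := (cdfBelow p r x).toReal with hadef
  set b := (p x).toReal with hbdef
  have haE : cdfBelow p r x = ENNReal.ofReal a := (ENNReal.ofReal_toReal haE_top).symm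
  have hbE : p x = ENNReal.ofReal b := (ENNReal.ofReal_toReal hbE_top).symm
  have ha : 0 ≤ a := ENNReal.toReal_nonneg
  have hb : 0 ≤ b := ENNReal.toReal_nonneg
  have hab' : a + b ≤ 1 := by
    have := ENNReal.toReal_mono ENNReal.one_ne_top hab
    rwa [ENNReal.toReal_add haE_top hbE_top, ENNReal.toReal_one] at this
  by_cases hb0 : p x = 0
  · simp only [hb0, zero_mul, add_zero, lintegral_const, measure_univ, mul_one]
    rw [Hfun, if_pos hb0]
  by_cases hb1 : p x = 1
  · -- the case `p x = 1`
    have hcdf0 : cdfBelow p r x = 0 := by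
      rw [cdfBelow, ENNReal.tsum_eq_zero]
      rintro ⟨y, hy⟩
      have hyx : y ≠ x := fun h => hirr x (h ▸ hy)
      have hsupp : p.support = {x} := (PMF.apply_eq_one_iff p x).mp hb1
      have : y ∉ p.support := by rw [hsupp, Set.mem_singleton_iff]; exact hyx
      exact PMF.apply_eq_zero_iff p y |>.mpr this
    simp only [hcdf0, hb1, one_mul, zero_add]
    have hcong : ∫⁻ u, (m.choose rk : ℝ≥0∞) * (unifIcc (Set.Iio u)) ^ rk
        * (1 - unifIcc (Set.Iio u)) ^ (m - rk) ∂unifIcc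
        = ∫⁻ u in Set.Icc (0:ℝ) 1,
            ENNReal.ofReal ((m.choose rk : ℝ) * u ^ rk * (1 - u) ^ (m - rk)) ∂volume := by
      have hrfl : ∫⁻ u, (m.choose rk : ℝ≥0∞) * (unifIcc (Set.Iio u)) ^ rk
          * (1 - unifIcc (Set.Iio u)) ^ (m - rk) ∂unifIcc
          = ∫⁻ u in Set.Icc (0:ℝ) 1, (m.choose rk : ℝ≥0∞) * (unifIcc (Set.Iio u)) ^ rk
          * (1 - unifIcc (Set.Iio u)) ^ (m - rk) ∂volume := rfl
      rw [hrfl]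
      refine setLIntegral_congr_fun measurableSet_Icc (fun u hu => ?_)
      rw [unifIcc_Iio hu.1 hu.2]
      rw [ENNReal.ofReal_mul (mul_nonneg (Nat.cast_nonneg _) (pow_nonneg hu.1 _)),
        ENNReal.ofReal_mul (Nat.cast_nonneg _),
        ENNReal.ofReal_pow hu.1, ENNReal.ofReal_pow (by linarith [hu.2]),
        ENNReal.ofReal_natCast]
      congr
      rw [← ENNReal.ofReal_one, ← ENNReal.ofReal_sub _ hu.1]
    rw [hcong, ← ofReal_integral_eq_lintegral_ofReal]
    · rw [MeasureTheory.integral_Icc_eq_integral_Ioc,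
        ← intervalIntegral.integral_of_le zero_le_one]
      simp_rw [mul_assoc]
      rw [intervalIntegral.integral_const_mul, beta_nat (m - rk) rk]
      have hm1 : rk + (m - rk) + 1 = m + 1 := by omega
      rw [hm1]
      have hn : (m.choose rk * rk.factorial * (m - rk).factorial : ℕ) = m.factorial :=
        Nat.choose_mul_factorial_mul_factorial hrk
      have hval : (m.choose rk : ℝ) * (rk.factorial * (m - rk).factorial / (m + 1).factorial)
          = ((m:ℝ) + 1)⁻¹ := by
        have hcast : (m.choose rk : ℝ) * rk.factorial * (m - rk).factorial = m.factorial := by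
          exact_mod_cast congrArg (fun n : ℕ => (n : ℝ)) hn
        rw [Nat.factorial_succ]
        push_cast
        have hmf : (m.factorial : ℝ) ≠ 0 := Nat.cast_ne_zero.2 (Nat.factorial_ne_zero m)
        field_simp
        linear_combination hcast
      rw [hval, Hfun, if_neg hb0, if_pos hb1, ENNReal.ofReal_inv_of_pos (by positivity)]
      congr
      rw [ENNReal.ofReal_add (by positivity) zero_le_one, ENNReal.ofReal_natCast,
        ENNReal.ofReal_one]
    · apply Continuous.integrableOn_Icc
      exact (continuous_const.mul (continuous_pow rk)).mul
        ((continuous_const.sub continuous_id).pow _)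
    · refine (ae_restrict_iff' measurableSet_Icc).2 (ae_of_all _ fun u hu => ?_)
      exact mul_nonneg (mul_nonneg (Nat.cast_nonneg _) (pow_nonneg hu.1 _))
        (pow_nonneg (by linarith [hu.2]) _)
  -- main case `0 < p x < 1`
  have hbpos : 0 < b := by
    rcases eq_or_lt_of_le hb with h | h
    · exact absurd (by rw [hbE, ← h, ENNReal.ofReal_zero]) hb0
    · exact h
  have hble : b ≤ 1 := by linarith
  have hblt : b < 1 := by
    rcases lt_or_eq_of_le hble with h | h
    · exact h
    · exact absurd (by rw [hbE, h, ENNReal.ofReal_one]) hb1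
  have hd : (0:ℝ) < 1 - b := by linarith
  have hc0 : 0 ≤ a / (1 - b) := div_nonneg ha (le_of_lt hd)
  have hc1 : a / (1 - b) ≤ 1 := (div_le_one hd).2 (by linarith)
  -- convert the left-hand side to a real integral
  have hcong : ∫⁻ u, (m.choose rk : ℝ≥0∞) * (cdfBelow p r x + p x * unifIcc (Set.Iio u)) ^ rk
        * (1 - (cdfBelow p r x + p x * unifIcc (Set.Iio u))) ^ (m - rk) ∂unifIcc
      = ∫⁻ u in Set.Icc (0:ℝ) 1,
          ENNReal.ofReal ((m.choose rk : ℝ) * (a + b*u) ^ rk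
            * (1 - (a + b*u)) ^ (m - rk)) ∂volume := by
    have hrfl : ∫⁻ u, (m.choose rk : ℝ≥0∞) * (cdfBelow p r x + p x * unifIcc (Set.Iio u)) ^ rk
        * (1 - (cdfBelow p r x + p x * unifIcc (Set.Iio u))) ^ (m - rk) ∂unifIcc
        = ∫⁻ u in Set.Icc (0:ℝ) 1,
            (m.choose rk : ℝ≥0∞) * (cdfBelow p r x + p x * unifIcc (Set.Iio u)) ^ rk
            * (1 - (cdfBelow p r x + p x * unifIcc (Set.Iio u))) ^ (m - rk) ∂volume := rfl
    rw [hrfl]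
    refine setLIntegral_congr_fun measurableSet_Icc (fun u hu => ?_)
    have h1 : (0:ℝ) ≤ u := hu.1
    have h2 : u ≤ 1 := hu.2
    have habu : 0 ≤ a + b * u := by positivity
    have habu1 : a + b * u ≤ 1 := by nlinarith
    rw [unifIcc_Iio h1 h2, haE, hbE, ← ENNReal.ofReal_mul hb,
      ← ENNReal.ofReal_add ha (by positivity)]
    rw [ENNReal.ofReal_mul (mul_nonneg (Nat.cast_nonneg _) (pow_nonneg habu _)),
      ENNReal.ofReal_mul (Nat.cast_nonneg _),
      ENNReal.ofReal_pow habu, ENNReal.ofReal_pow (by linarith), ENNReal.ofReal_natCast]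
    congr
    rw [← ENNReal.ofReal_one, ← ENNReal.ofReal_sub _ habu]
  rw [hcong, ← ofReal_integral_eq_lintegral_ofReal]
  · rw [MeasureTheory.integral_Icc_eq_integral_Ioc,
      ← intervalIntegral.integral_of_le zero_le_one,
      real_identity m rk hrk a b ha hb hab' hblt]
    -- now convert the real sum into `Hfun`
    rw [Hfun, if_neg hb0, if_neg hb1]
    have e1 : (1 : ℝ≥0∞) - p x = ENNReal.ofReal (1 - b) := by
      rw [hbE, ← ENNReal.ofReal_one, ← ENNReal.ofReal_sub _ hb]
    have e2 : cdfBelow p r x / (1 - p x) = ENNReal.ofReal (a/(1-b)) := by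
      rw [haE, e1, ← ENNReal.ofReal_div_of_pos hd]
    have e3 : (1:ℝ≥0∞) - cdfBelow p r x / (1 - p x) = ENNReal.ofReal (1 - a/(1-b)) := by
      rw [e2, ← ENNReal.ofReal_one, ← ENNReal.ofReal_sub _ hc0]
    have e5 : ∀ e : ℕ, ((e:ℝ≥0∞)+1)⁻¹ = ENNReal.ofReal (((e:ℝ)+1)⁻¹) := by
      intro e
      rw [ENNReal.ofReal_inv_of_pos (by positivity), ENNReal.ofReal_add (by positivity) zero_le_one,
        ENNReal.ofReal_natCast, ENNReal.ofReal_one]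
    have hinner_nn : ∀ e j : ℕ,
        0 ≤ (if j ≤ rk then ((m-e).choose (rk-j) : ℝ) * (a/(1-b))^(rk-j)
                * (1 - a/(1-b))^((m-e)-(rk-j)) else 0) * ((e:ℝ)+1)⁻¹ := by
      intro e j
      split
      · exact mul_nonneg (mul_nonneg (mul_nonneg (Nat.cast_nonneg _) (pow_nonneg hc0 _))
          (pow_nonneg (by linarith) _)) (by positivity)
      · simp
    have hSe_nn : ∀ e : ℕ, 0 ≤ ∑ j ∈ range (e+1),
        (if j ≤ rk then ((m-e).choose (rk-j) : ℝ) * (a/(1-b))^(rk-j)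
            * (1 - a/(1-b))^((m-e)-(rk-j)) else 0) * ((e:ℝ)+1)⁻¹ :=
      fun e => Finset.sum_nonneg fun j _ => hinner_nn e j
    rw [ENNReal.ofReal_sum_of_nonneg (fun e _ =>
      mul_nonneg (mul_nonneg (mul_nonneg (hSe_nn e) (by positivity)) (by positivity))
        (by positivity))]
    refine Finset.sum_congr rfl fun e he => ?_
    rw [ENNReal.ofReal_mul (mul_nonneg (mul_nonneg (hSe_nn e) (Nat.cast_nonneg _))
        (by positivity)),
      ENNReal.ofReal_mul (mul_nonneg (hSe_nn e) (Nat.cast_nonneg _)),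
      ENNReal.ofReal_mul (hSe_nn e), ENNReal.ofReal_pow hb, ENNReal.ofReal_pow (le_of_lt hd),
      ENNReal.ofReal_natCast, ← hbE, ← e1]
    congr 1
    congr 1
    congr 1
    rw [ENNReal.ofReal_sum_of_nonneg (fun j _ => hinner_nn e j)]
    refine Finset.sum_congr rfl fun j hj => ?_
    rw [ENNReal.ofReal_mul (by
      split
      · exact mul_nonneg (mul_nonneg (Nat.cast_nonneg _) (pow_nonneg hc0 _))
          (pow_nonneg (by linarith) _)
      · exact le_rfl), e5]
    congr 1
    split
    · rw [ENNReal.ofReal_mul (by positivity), ENNReal.ofReal_mul (by positivity),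
        ENNReal.ofReal_pow hc0, ENNReal.ofReal_pow (by linarith), ENNReal.ofReal_natCast,
        ← e2, ← e3]
    · simp
  · apply Continuous.integrableOn_Icc
    exact (continuous_const.mul ((continuous_const.add (continuous_const.mul
      continuous_id)).pow rk)).mul ((continuous_const.sub (continuous_const.add
      (continuous_const.mul continuous_id))).pow _)
  · refine (ae_restrict_iff' measurableSet_Icc).2 (ae_of_all _ fun u hu => ?_)
    have h1 : (0:ℝ) ≤ u := hu.1
    have h2 : u ≤ 1 := hu.2
    have habu : 0 ≤ a + b * u := by positivity
    have habu1 : a + b * u ≤ 1 := by nlinarith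
    exact mul_nonneg (mul_nonneg (Nat.cast_nonneg _) (pow_nonneg habu _))
      (pow_nonneg (by linarith) _)

end PerX

/-- **Theorem (exact sampling distribution under the alternative).** For every `0 ≤ rk ≤ m`,
`P(R = rk) = ∑_{x ∈ T} H(x, m, rk) ⬝ q(x)`. -/
theorem srs_distribution
    {T : Type} [Countable T] [Nonempty T] [MeasurableSpace T] [MeasurableSingletonClass T]
    (r : T → T → Prop) (hr : IsStrictTotalOrder T r) (p q : PMF T)
    (m : ℕ) (hm : 1 ≤ m)
    (Ω : Type) (_ : MeasurableSpace Ω) (μ : Measure Ω) (hμ : IsProbabilityMeasure μ)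
    (X : Fin (m + 1) → Ω → T) (U : Fin (m + 1) → Ω → ℝ)
    (hsetup : IsRankSetup μ p.toMeasure q.toMeasure m X U) :
    ∀ rk : ℕ, rk ≤ m →
      μ {ω | rankStat r m X U ω = rk} = ∑' x : T, Hfun p r m rk x * q x := by
  classical
  obtain ⟨hX, hU, hindep, hlaw0, hlawi⟩ := hsetup
  intro rk hrk
  have hirr : ∀ y : T, ¬ r y y := fun y => (hr.toIsStrictOrder.toIrrefl).irrefl y
  set ν : Fin (m + 1) → Measure (T × ℝ) := fun i =>
    if i = 0 then q.toMeasure.prod unifIcc else p.toMeasure.prod unifIcc with hν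
  haveI hνprob : ∀ i, IsProbabilityMeasure (ν i) := by
    intro i
    rw [hν]
    dsimp only
    split <;> infer_instance
  have hZm : Measurable (fun ω i => (X i ω, U i ω) : Ω → Fin (m+1) → T × ℝ) :=
    measurable_pi_lambda _ fun i => (hX i).prodMk (hU i)
  have hpairm : ∀ i, Measurable (fun ω => (X i ω, U i ω)) := fun i => (hX i).prodMk (hU i)
  -- the pushforward of μ under the full vector is the product measure
  have hmap : μ.map (fun ω i => (X i ω, U i ω)) = Measure.pi ν := by
    refine (Measure.pi_eq fun s hs => ?_).symm
    rw [Measure.map_apply hZm (MeasurableSet.univ_pi hs)]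
    have hpre : (fun ω i => (X i ω, U i ω)) ⁻¹' (Set.univ.pi s)
        = ⋂ i ∈ (Finset.univ : Finset (Fin (m+1))), (fun ω => (X i ω, U i ω)) ⁻¹' (s i) := by
      ext ω
      simp [Set.mem_pi]
    rw [hpre, hindep.measure_inter_preimage_eq_mul Finset.univ (fun i _ => hs i)]
    refine Finset.prod_congr rfl fun i _ => ?_
    rw [← Measure.map_apply (hpairm i) (hs i)]
    by_cases hi0 : i = 0
    · subst hi0; rw [hlaw0, hν]; simp
    · rw [hlawi i hi0, hν]; simp [hi0]
  -- the product space over the remaining coordinates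
  set ν' : Measure (T × ℝ) := p.toMeasure.prod unifIcc with hν'
  set πm : Measure (Fin m → T × ℝ) := Measure.pi (fun _ : Fin m => ν') with hπm
  -- the event on the split product space
  set B : Set ((T × ℝ) × (Fin m → T × ℝ)) :=
    {aw | (∑ j : Fin m, if aw.2 j ∈ succSet r aw.1.1 aw.1.2 then 1 else 0) = rk} with hB
  have hSjm : ∀ j : Fin m, MeasurableSet
      {aw : (T × ℝ) × (Fin m → T × ℝ) | aw.2 j ∈ succSet r aw.1.1 aw.1.2} := by
    intro j
    have hmap1 : Measurable (fun aw : (T × ℝ) × (Fin m → T × ℝ) => ((aw.2 j).1, aw.1.1)) :=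
      (((measurable_pi_apply j).comp measurable_snd).fst).prodMk (measurable_fst.fst)
    have hmap2 : Measurable (fun aw : (T × ℝ) × (Fin m → T × ℝ) => ((aw.2 j).2, aw.1.2)) :=
      (((measurable_pi_apply j).comp measurable_snd).snd).prodMk (measurable_fst.snd)
    have hset : {aw : (T × ℝ) × (Fin m → T × ℝ) | aw.2 j ∈ succSet r aw.1.1 aw.1.2}
        = (fun aw : (T × ℝ) × (Fin m → T × ℝ) => ((aw.2 j).1, aw.1.1)) ⁻¹'
            {yx : T × T | r yx.1 yx.2}
          ∪ ((fun aw : (T × ℝ) × (Fin m → T × ℝ) => ((aw.2 j).1, aw.1.1)) ⁻¹'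
              {yx : T × T | yx.1 = yx.2}
            ∩ (fun aw : (T × ℝ) × (Fin m → T × ℝ) => ((aw.2 j).2, aw.1.2)) ⁻¹'
              {vv : ℝ × ℝ | vv.1 < vv.2}) := by
      ext aw
      simp only [Set.mem_setOf_eq, Set.mem_union, Set.mem_inter_iff, Set.mem_preimage,
        mem_succSet_iff]
    rw [hset]
    exact ((hmap1 (Set.to_countable _).measurableSet).union
      ((hmap1 (Set.to_countable _).measurableSet).inter
        (hmap2 (measurableSet_lt measurable_fst measurable_snd))))
  have hBm : MeasurableSet B := by
    rw [hB]
    have : Measurable (fun aw : (T × ℝ) × (Fin m → T × ℝ) =>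
        (∑ j : Fin m, if aw.2 j ∈ succSet r aw.1.1 aw.1.2 then 1 else 0 : ℕ)) := by
      apply Finset.measurable_sum
      intro j _
      exact Measurable.ite (hSjm j) measurable_const measurable_const
    exact this (measurableSet_singleton rk)
  -- the defining event equals the preimage of `B` under the coordinate-splitting map
  set e : (Fin (m+1) → T × ℝ) ≃ᵐ (T × ℝ) × (Fin m → T × ℝ) :=
    MeasurableEquiv.piFinSuccAbove (fun _ : Fin (m+1) => T × ℝ) 0 with he
  have hsum : ∀ ω : Ω, (∑ j : Fin m,
      (if (X ((0:Fin (m+1)).succAbove j) ω, U ((0:Fin (m+1)).succAbove j) ω)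
          ∈ succSet r (X 0 ω) (U 0 ω) then 1 else 0) : ℕ) = rankStat r m X U ω := by
    intro ω
    rw [rankStat]
    refine Finset.sum_congr rfl fun j _ => ?_
    rw [Fin.zero_succAbove]
    by_cases hP : r (X j.succ ω) (X 0 ω)
    · have hQ : ¬(X j.succ ω = X 0 ω ∧ U j.succ ω < U 0 ω) := by
        rintro ⟨h1, -⟩; exact hirr _ (h1 ▸ hP)
      rw [if_pos ((mem_succSet_iff).2 (Or.inl hP)), if_pos hP, if_neg hQ]
    · by_cases hQ : (X j.succ ω = X 0 ω ∧ U j.succ ω < U 0 ω)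
      · rw [if_pos ((mem_succSet_iff).2 (Or.inr hQ)), if_neg hP, if_pos hQ]
      · rw [if_neg (fun hmem => by
          rcases (mem_succSet_iff).1 hmem with h | h
          exacts [hP h, hQ h]), if_neg hP, if_neg hQ]
  have hev : {ω | rankStat r m X U ω = rk}
      = (fun ω i => (X i ω, U i ω)) ⁻¹' (e ⁻¹' B) := by
    ext ω
    simp only [Set.mem_setOf_eq, Set.mem_preimage]
    have hmem : (e fun i => (X i ω, U i ω)) ∈ B ↔ (∑ j : Fin m,
        (if (X ((0:Fin (m+1)).succAbove j) ω, U ((0:Fin (m+1)).succAbove j) ω)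
            ∈ succSet r (X 0 ω) (U 0 ω) then 1 else 0) : ℕ) = rk := Iff.rfl
    rw [hmem, hsum ω]
  rw [hev, ← Measure.map_apply hZm (e.measurable hBm), hmap]
  have hmp := measurePreserving_piFinSuccAbove ν 0
  have hνsucc : (fun j : Fin m => ν ((0 : Fin (m+1)).succAbove j)) = fun _ : Fin m => ν' := by
    funext j
    rw [hν, hν']
    simp [Fin.succ_ne_zero]
  rw [(by exact hmp.measure_preimage hBm.nullMeasurableSet :
    (Measure.pi ν) (e ⁻¹' B) = ((ν 0).prod (Measure.pi fun j => ν ((0:Fin (m+1)).succAbove j))) B)]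
  rw [hνsucc]
  have hν0 : ν 0 = q.toMeasure.prod unifIcc := by rw [hν]; simp
  rw [hν0, ← hπm, Measure.prod_apply hBm]
  -- compute the inner measure pointwise
  have hinner : ∀ a : T × ℝ, πm (Prod.mk a ⁻¹' B)
      = (m.choose rk : ℝ≥0∞) * (cdfBelow p r a.1 + p a.1 * unifIcc (Set.Iio a.2)) ^ rk
        * (1 - (cdfBelow p r a.1 + p a.1 * unifIcc (Set.Iio a.2))) ^ (m - rk) := by
    intro a
    have hpre : Prod.mk a ⁻¹' B
        = {w : Fin m → T × ℝ | (∑ j : Fin m, if w j ∈ succSet r a.1 a.2 then 1 else 0) = rk} := by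
      rfl
    rw [hpre, hπm, binom_count ν' (succSet_measurable r a.1 a.2) m rk,
      succSet_measure p r hirr a.1 a.2]
  rw [lintegral_congr hinner]
  -- apply Fubini for the outer double integral
  have hg1 : Measurable (fun a : T × ℝ => cdfBelow p r a.1) :=
    (measurable_of_countable (fun x : T => cdfBelow p r x)).comp measurable_fst
  have hg2 : Measurable (fun a : T × ℝ => p a.1) :=
    (measurable_of_countable (fun x : T => p x)).comp measurable_fst
  have hg3 : Measurable (fun a : T × ℝ => unifIcc (Set.Iio a.2)) := by
    have hmono : Monotone (fun u : ℝ => unifIcc (Set.Iio u)) :=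
      fun u v huv => measure_mono (Set.Iio_subset_Iio huv)
    exact (hmono.measurable).comp measurable_snd
  have hgm : Measurable (fun a : T × ℝ =>
      (m.choose rk : ℝ≥0∞) * (cdfBelow p r a.1 + p a.1 * unifIcc (Set.Iio a.2)) ^ rk
        * (1 - (cdfBelow p r a.1 + p a.1 * unifIcc (Set.Iio a.2))) ^ (m - rk)) := by
    exact ((measurable_const.mul ((hg1.add (hg2.mul hg3)).pow_const rk)).mul
      ((measurable_const.sub (hg1.add (hg2.mul hg3))).pow_const (m - rk)))
  rw [MeasureTheory.lintegral_prod _ hgm.aemeasurable]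
  have hper : ∀ x : T, ∫⁻ u, (m.choose rk : ℝ≥0∞)
      * (cdfBelow p r x + p x * unifIcc (Set.Iio u)) ^ rk
      * (1 - (cdfBelow p r x + p x * unifIcc (Set.Iio u))) ^ (m - rk) ∂unifIcc
      = Hfun p r m rk x := fun x => per_x_integral p r hirr m rk hrk x
  rw [lintegral_congr fun x => hper x]
  rw [lintegral_countable' (Hfun p r m rk)]
  refine tsum_congr fun x => ?_
  rw [PMF.toMeasure_apply_singleton _ _ (measurableSet_singleton x)]

end
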